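/- (Universal Bochner-Weitzenböck formula) In U(so(n,C)), the translated element ê_{ij}^q equals a linear combination of the ê_{ji}^p with Casimir coefficients: ê_{ij}^q = (−1)^q ê_{ji}^q − ((1−(−1)^q)/2) ê_{ji}^{q−1} + Σ_{p=0}^{q−1} (−1)^p ĉ_{q−1−p} ê_{ji}^p, for all q ≥ 1. -/
import Mathlib


/-- The iterated products `e_{ij}^q` in an associative algebra, `e_{ij}^0 = δ_{ij}`. -/
def epow {n : ℕ} {R : Type*} [Ring R] (e : Fin n → Fin n → R) : ℕ → Fin n → Fin n → R
  | 0, i, j => if i = j then 1 else 0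
  | q + 1, i, j => ∑ k : Fin n, e i k * epow e q k j

/-- The translated generators `ê_{ij} := e_{ij} + ((n−1)/2) δ_{ij}`. -/
noncomputable def ehat {n : ℕ} {R : Type*} [Ring R] [Algebra ℂ R]
    (e : Fin n → Fin n → R) (i j : Fin n) : R :=
  e i j + (((n : ℂ) - 1) / 2) • (if i = j then (1 : R) else 0)

/-- The translated Casimir elements `ĉ_q := Σ_i ê_{ii}^q`. -/
noncomputable def chat {n : ℕ} {R : Type*} [Ring R] [Algebra ℂ R]
    (e : Fin n → Fin n → R) (q : ℕ) : R :=
  ∑ i : Fin n, epow (ehat e) q i i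

section Aux
variable {n : ℕ} {R : Type*} [Ring R] [Algebra ℂ R] (e : Fin n → Fin n → R)

/-- right-multiplication form of epow -/
lemma epow_succ_right (f : Fin n → Fin n → R) (q : ℕ) (i j : Fin n) :
    epow f (q + 1) i j = ∑ k : Fin n, epow f q i k * f k j := by
  induction q generalizing i j with
  | zero =>
    simp [epow, ite_mul, mul_ite]
  | succ q ih =>
    calc epow f (q + 2) i j = ∑ k : Fin n, f i k * epow f (q+1) k j := rfl
      _ = ∑ k : Fin n, f i k * ∑ l : Fin n, epow f q k l * f l j := by
            simp_rw [ih]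
      _ = ∑ l : Fin n, (∑ k : Fin n, f i k * epow f q k l) * f l j := by
            simp_rw [Finset.mul_sum, Finset.sum_mul]
            rw [Finset.sum_comm]
            simp [mul_assoc]
      _ = ∑ l : Fin n, epow f (q+1) i l * f l j := rfl

lemma ehat_add_symm (hskew : ∀ i j, e i j = - e j i) (i j : Fin n) :
    ehat e i j + ehat e j i = ((n : ℂ) - 1) • (if i = j then (1:R) else 0) := by
  simp only [ehat]
  rw [hskew i j]
  have : (if j = i then (1:R) else 0) = (if i = j then (1:R) else 0) := by
    simp [eq_comm]
  rw [this]
  have h2 : ((n : ℂ) - 1) / 2 + ((n : ℂ) - 1) / 2 = (n : ℂ) - 1 := by ring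
  calc (-e j i + ((↑n - 1) / 2 : ℂ) • if i = j then (1:R) else 0) +
      (e j i + ((↑n - 1) / 2 : ℂ) • if i = j then (1:R) else 0)
      = (((↑n - 1) / 2 : ℂ) + ((↑n - 1) / 2 : ℂ)) • (if i = j then (1:R) else 0) := by
        rw [add_smul]; abel
    _ = _ := by rw [h2]

lemma ehat_eq (i j : Fin n) :
    ehat e i j = e i j + algebraMap ℂ R (if i = j then ((n:ℂ)-1)/2 else 0) := by
  simp only [ehat]
  split_ifs <;> simp [Algebra.algebraMap_eq_smul_one]

lemma comm_shift (A B : R) (r s : ℂ) :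
    (A + algebraMap ℂ R r) * (B + algebraMap ℂ R s)
      - (B + algebraMap ℂ R s) * (A + algebraMap ℂ R r) = A * B - B * A := by
  simp only [mul_add, add_mul]
  rw [Algebra.commutes r B, Algebra.commutes r ((algebraMap ℂ R) s), Algebra.commutes s A]
  abel

lemma hcomm_hat
    (hcomm : ∀ k l i j, e k l * e i j - e i j * e k l =
      (if k = i then e l j else 0) + (if k = j then e i l else 0)
        - (if i = l then e k j else 0) - (if l = j then e i k else 0))
    (a b i j : Fin n) :
    ehat e a b * ehat e i j - ehat e i j * ehat e a b =
      (if a = i then ehat e b j else 0) + (if a = j then ehat e i b else 0)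
        - (if i = b then ehat e a j else 0) - (if b = j then ehat e i a else 0) := by
  simp only [ehat_eq]
  rw [comm_shift, hcomm a b i j]
  by_cases hai : a = i <;> by_cases haj : a = j <;> by_cases hib : i = b <;>
    by_cases hbj : b = j <;> simp_all [eq_comm] <;> abel

lemma comm3 (x y z : R) : x*(y*z) - (y*z)*x = (x*y - y*x)*z + y*(x*z - z*x) := by
  noncomm_ring

lemma comm_epow
    (hcomm : ∀ k l i j, e k l * e i j - e i j * e k l =
      (if k = i then e l j else 0) + (if k = j then e i l else 0)
        - (if i = l then e k j else 0) - (if l = j then e i k else 0)) :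
    ∀ (q : ℕ) (a b i j : Fin n),
    ehat e a b * epow (ehat e) q i j - epow (ehat e) q i j * ehat e a b =
      (if i = a then epow (ehat e) q b j else 0) - (if i = b then epow (ehat e) q a j else 0)
        - (if b = j then epow (ehat e) q i a else 0)
        + (if a = j then epow (ehat e) q i b else 0) := by
  intro q
  induction q with
  | zero =>
    intro a b i j
    simp only [epow]
    by_cases h1 : i = a <;> by_cases h2 : i = b <;> by_cases h3 : b = j <;>
      by_cases h4 : a = j <;> simp_all [eq_comm] <;> abel
  | succ q ih =>
    intro a b i j
    show ehat e a b * (∑ k : Fin n, ehat e i k * epow (ehat e) q k j)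
        - (∑ k : Fin n, ehat e i k * epow (ehat e) q k j) * ehat e a b = _
    rw [Finset.mul_sum, Finset.sum_mul, ← Finset.sum_sub_distrib]
    have hs : ∀ k : Fin n, ehat e a b * (ehat e i k * epow (ehat e) q k j)
        - ehat e i k * epow (ehat e) q k j * ehat e a b =
        ((if a = i then ehat e b k * epow (ehat e) q k j else 0)
          + (if a = k then ehat e i b * epow (ehat e) q k j else 0)
          - (if i = b then ehat e a k * epow (ehat e) q k j else 0)
          - (if b = k then ehat e i a * epow (ehat e) q k j else 0))
        + ((if k = a then ehat e i k * epow (ehat e) q b j else 0)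
          - (if k = b then ehat e i k * epow (ehat e) q a j else 0)
          - (if b = j then ehat e i k * epow (ehat e) q k a else 0)
          + (if a = j then ehat e i k * epow (ehat e) q k b else 0)) := by
      intro k
      rw [comm3, hcomm_hat e hcomm, ih]
      simp only [add_mul, sub_mul, mul_add, mul_sub, ite_mul, mul_ite, zero_mul, mul_zero]
    simp_rw [hs]
    simp only [Finset.sum_add_distrib, Finset.sum_sub_distrib, Finset.sum_ite_irrel,
      Finset.sum_const_zero, Finset.sum_ite_eq, Finset.sum_ite_eq', Finset.mem_univ, if_true]
    have ep : ∀ (b x : Fin n), (∑ k : Fin n, ehat e b k * epow (ehat e) q k x)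
        = epow (ehat e) (q+1) b x := fun _ _ => rfl
    simp_rw [ep]
    have hflip : ∀ (x y : R), (if a = i then x else y) = (if i = a then x else y) := by
      intros; simp [eq_comm]
    rw [hflip]
    abel

lemma key (hskew : ∀ i j, e i j = - e j i)
    (hcomm : ∀ k l i j, e k l * e i j - e i j * e k l =
      (if k = i then e l j else 0) + (if k = j then e i l else 0)
        - (if i = l then e k j else 0) - (if l = j then e i k else 0))
    (q : ℕ) (i j : Fin n) :
    epow (ehat e) (q+1) i j =
      -(∑ k : Fin n, epow (ehat e) q k j * ehat e k i) - epow (ehat e) q j i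
        + (if i = j then chat e q else 0) := by
  have h1 : ∀ k : Fin n, ehat e i k
      = ((n:ℂ)-1) • (if i = k then (1:R) else 0) - ehat e k i := by
    intro k
    rw [← ehat_add_symm e hskew i k]; abel
  have h2 : ∀ k : Fin n, ehat e k i * epow (ehat e) q k j =
      epow (ehat e) q k j * ehat e k i + (epow (ehat e) q i j
        - (if k = i then epow (ehat e) q k j else 0)
        - (if i = j then epow (ehat e) q k k else 0)
        + (if k = j then epow (ehat e) q k i else 0)) := by
    intro k
    have h := comm_epow e hcomm q k i k j
    rw [if_pos rfl] at h
    rw [← h]; abel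
  calc epow (ehat e) (q+1) i j = ∑ k : Fin n, ehat e i k * epow (ehat e) q k j := rfl
    _ = ∑ k : Fin n, ((((n:ℂ)-1) • (if i = k then (1:R) else 0)) * epow (ehat e) q k j
          - ehat e k i * epow (ehat e) q k j) := by simp_rw [h1, sub_mul]
    _ = ((n:ℂ)-1) • epow (ehat e) q i j
          - ∑ k : Fin n, ehat e k i * epow (ehat e) q k j := by
        rw [Finset.sum_sub_distrib]
        congr 1
        simp [smul_mul_assoc, ite_mul, apply_ite, Finset.sum_ite_eq, Finset.mem_univ]
    _ = ((n:ℂ)-1) • epow (ehat e) q i j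
          - ((∑ k : Fin n, epow (ehat e) q k j * ehat e k i)
            + ((n • epow (ehat e) q i j - epow (ehat e) q i j
              - (if i = j then chat e q else 0) + epow (ehat e) q j i))) := by
        congr 1
        simp_rw [h2]
        rw [Finset.sum_add_distrib]
        congr 1
        simp only [Finset.sum_add_distrib, Finset.sum_sub_distrib, Finset.sum_ite_irrel,
          Finset.sum_const_zero, Finset.sum_ite_eq, Finset.sum_ite_eq', Finset.mem_univ,
          if_true, Finset.sum_const, Finset.card_univ, Fintype.card_fin, chat]
    _ = _ := by
        rw [← Nat.cast_smul_eq_nsmul ℂ n (epow (ehat e) q i j), sub_smul, one_smul]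
        abel

lemma main_aux (hskew : ∀ i j, e i j = - e j i)
    (hcomm : ∀ k l i j, e k l * e i j - e i j * e k l =
      (if k = i then e l j else 0) + (if k = j then e i l else 0)
        - (if i = l then e k j else 0) - (if l = j then e i k else 0)) :
    ∀ (m : ℕ) (i j : Fin n),
      epow (ehat e) (m+1) i j =
        ((-1 : ℂ) ^ (m+1)) • epow (ehat e) (m+1) j i
          - ((1 - (-1 : ℂ) ^ (m+1)) / 2) • epow (ehat e) m j i
          + ∑ p ∈ Finset.range (m+1),
              ((-1 : ℂ) ^ p) • (chat e (m - p) * epow (ehat e) p j i) := by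
  intro m
  induction m with
  | zero =>
    intro i j
    simp only [zero_add, Finset.sum_range_one, pow_one, pow_zero, one_smul, Nat.sub_self]
    have h1 : ∀ (a b : Fin n), epow (ehat e) 1 a b = ehat e a b := by
      intro a b
      show ∑ k : Fin n, ehat e a k * epow (ehat e) 0 k b = _
      simp [epow, mul_ite, Finset.sum_ite_eq', Finset.mem_univ]
    have hc0 : chat e 0 = (n : ℕ) • (1 : R) := by
      simp [chat, epow]
    rw [h1, h1, hc0]
    have h2 : ehat e i j = ((n:ℂ)-1) • (if i = j then (1:R) else 0) - ehat e j i :=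
      eq_sub_of_add_eq (ehat_add_symm e hskew i j)
    rw [h2]
    have h3 : (epow (ehat e) 0 j i) = (if i = j then (1:R) else 0) := by
      simp [epow, eq_comm]
    rw [h3]
    have h4 : ((n:ℕ) • (1:R)) * (if i = j then (1:R) else 0)
        = (n:ℂ) • (if i = j then (1:R) else 0) := by
      rw [Nat.cast_smul_eq_nsmul ℂ n]
      simp [smul_mul_assoc]
    rw [h4, show ((1:ℂ) - -1)/2 = 1 by norm_num, one_smul, sub_smul, one_smul]
    simp only [neg_smul, one_smul]
    abel
  | succ m ih =>
    intro i j
    have hsum : (∑ k : Fin n, epow (ehat e) (m+1) k j * ehat e k i)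
        = ((-1:ℂ)^(m+1)) • epow (ehat e) (m+2) j i
          - ((1 - (-1:ℂ)^(m+1))/2) • epow (ehat e) (m+1) j i
          + ∑ p ∈ Finset.range (m+1),
              ((-1:ℂ)^p) • (chat e (m - p) * epow (ehat e) (p+1) j i) := by
      calc ∑ k : Fin n, epow (ehat e) (m+1) k j * ehat e k i
          = ∑ k : Fin n, (((-1:ℂ)^(m+1)) • (epow (ehat e) (m+1) j k * ehat e k i)
              - ((1 - (-1:ℂ)^(m+1))/2) • (epow (ehat e) m j k * ehat e k i)
              + ∑ p ∈ Finset.range (m+1),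
                  ((-1:ℂ)^p) • (chat e (m - p) * (epow (ehat e) p j k * ehat e k i))) := by
            refine Finset.sum_congr rfl (fun k _ => ?_)
            rw [ih k j]
            simp only [add_mul, sub_mul, smul_mul_assoc, Finset.sum_mul, mul_assoc]
        _ = ((-1:ℂ)^(m+1)) • (∑ k : Fin n, epow (ehat e) (m+1) j k * ehat e k i)
              - ((1 - (-1:ℂ)^(m+1))/2) • (∑ k : Fin n, epow (ehat e) m j k * ehat e k i)
              + ∑ p ∈ Finset.range (m+1), ((-1:ℂ)^p)
                  • (chat e (m - p) * ∑ k : Fin n, epow (ehat e) p j k * ehat e k i) := by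
            rw [Finset.sum_add_distrib, Finset.sum_sub_distrib, Finset.sum_comm]
            simp only [Finset.smul_sum, Finset.mul_sum]
        _ = _ := by
            simp only [← epow_succ_right]
    rw [key e hskew hcomm (m+1) i j, hsum,
      Finset.sum_range_succ' (fun p => ((-1:ℂ)^p)
        • (chat e (m + 1 - p) * epow (ehat e) p j i)) (m+1)]
    simp only [Nat.succ_sub_succ_eq_sub, Nat.sub_zero, pow_zero, one_smul]
    have hneg : ∀ p : ℕ, ((-1:ℂ))^(p+1) • (chat e (m - p) * epow (ehat e) (p+1) j i)
        = -(((-1:ℂ))^p • (chat e (m - p) * epow (ehat e) (p+1) j i)) := by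
      intro p; rw [pow_succ]; simp
    simp_rw [hneg]
    rw [Finset.sum_neg_distrib]
    have h0 : chat e (m + 1) * epow (ehat e) 0 j i = (if i = j then chat e (m+1) else 0) := by
      simp [epow, mul_ite, eq_comm]
    rw [h0]
    have hsc : ((1 - (-1:ℂ)^(m+1+1))/2) = 1 - (1-(-1:ℂ)^(m+1))/2 := by
      rw [pow_succ]; ring
    have hpow : ((-1:ℂ))^(m+1+1) = -((-1:ℂ))^(m+1) := by rw [pow_succ]; ring
    rw [hsc, hpow, neg_smul, sub_smul, one_smul]
    abel

end Aux

/-- The universal Bochner-Weitzenböck formula in `U(so(n,ℂ))`: for `q ≥ 1`,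
`ê_{ij}^q = (−1)^q ê_{ji}^q − ((1−(−1)^q)/2) ê_{ji}^{q−1} + Σ_{p=0}^{q−1} (−1)^p ĉ_{q−1−p} ê_{ji}^p`. -/
theorem stmt7 {n : ℕ} {R : Type*} [Ring R] [Algebra ℂ R] (e : Fin n → Fin n → R)
    (hskew : ∀ i j, e i j = - e j i)
    (hdiag : ∀ i, e i i = 0)
    (hcomm : ∀ k l i j, e k l * e i j - e i j * e k l =
      (if k = i then e l j else 0) + (if k = j then e i l else 0)
        - (if i = l then e k j else 0) - (if l = j then e i k else 0)) :
    ∀ (q : ℕ), 1 ≤ q → ∀ (i j : Fin n),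
      epow (ehat e) q i j =
        ((-1 : ℂ) ^ q) • epow (ehat e) q j i
          - ((1 - (-1 : ℂ) ^ q) / 2) • epow (ehat e) (q - 1) j i
          + ∑ p ∈ Finset.range q,
              ((-1 : ℂ) ^ p) • (chat e (q - 1 - p) * epow (ehat e) p j i) := by
  intro q hq i j
  obtain ⟨m, rfl⟩ : ∃ m, q = m + 1 := ⟨q - 1, (Nat.succ_pred_eq_of_pos hq).symm⟩
  simpa [Nat.add_sub_cancel] using main_aux e hskew hcomm m i j
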